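/- arXiv:2601.04431 — 6 statements merged into one kernel-verified Lean document; each statement's English description precedes it below -/
import Mathlib

section
/- Let f : ℝ → ℝ be continuous with f(0) = 0 and |f(t)| ≤ α|t| + β for some positive reals α, β. Then f is strongly continuous: for every Hilbert space H and every net (x_i) of bounded self-adjoint operators on H converging in the strong operator topology to a self-adjoint operator x, with uniformly bounded norms, the net (f(x_i)) converges strongly to f(x) (where f is applied via continuous functional calculus). -/
open Filter Topology

/-- **Strong continuity of continuous functional calculus.**
If `f : ℝ → ℝ` is continuous with `f 0 = 0` and `|f t| ≤ α * |t| + β` for some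
positive reals `α, β`, then `f` is strongly continuous: for every complex Hilbert
space `H` and every net `(x i)` of bounded self-adjoint operators on `H`, uniformly
bounded in norm and converging in the strong operator topology to a self-adjoint
operator `T`, the net `(f (x i))` (given by the continuous functional calculus)
converges strongly to `f T`. -/
theorem strongly_continuous_of_linear_growth
    (f : ℝ → ℝ) (hf : Continuous f) (hf0 : f 0 = 0)
    (α β : ℝ) (hα : 0 < α) (hβ : 0 < β) (hgrowth : ∀ t : ℝ, |f t| ≤ α * |t| + β)
    {H : Type*} [NormedAddCommGroup H] [InnerProductSpace ℂ H] [CompleteSpace H]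
    {ι : Type*} (l : Filter ι) [l.NeBot]
    (x : ι → (H →L[ℂ] H)) (T : H →L[ℂ] H)
    (hx : ∀ i, IsSelfAdjoint (x i)) (hT : IsSelfAdjoint T)
    (hbdd : ∃ C : ℝ, ∀ i, ‖x i‖ ≤ C)
    (hsot : ∀ v : H, Tendsto (fun i => x i v) l (𝓝 (T v))) :
    ∀ v : H, Tendsto (fun i => cfc f (x i) v) l (𝓝 (cfc f T v)) := by
  obtain hH | hH := subsingleton_or_nontrivial H
  · intro v
    have : ∀ i, cfc f (x i) v = cfc f T v := fun i => Subsingleton.elim _ _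
    simpa [this] using tendsto_const_nhds
  obtain ⟨C, hC⟩ := hbdd
  have hι : Nonempty ι := nonempty_of_neBot l
  have hC0 : 0 ≤ C := le_trans (norm_nonneg _) (hC (Classical.arbitrary ι))
  have hTC : ‖T‖ ≤ C := by
    refine ContinuousLinearMap.opNorm_le_bound _ hC0 fun w => ?_
    refine le_of_tendsto (hsot w).norm (Eventually.of_forall fun i => ?_)
    exact ((x i).le_opNorm w).trans (mul_le_mul_of_nonneg_right (hC i) (norm_nonneg w))
  -- spectra are contained in [-C, C]
  have hspec : ∀ a : H →L[ℂ] H, ‖a‖ ≤ C → spectrum ℝ a ⊆ Set.Icc (-C) C := by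
    intro a ha t ht
    have h1 : |t| ≤ ‖a‖ := by simpa using spectrum.norm_le_norm_of_mem ht
    exact Set.mem_Icc.mpr (abs_le.mp (h1.trans ha))
  -- powers converge strongly
  have hpow : ∀ n : ℕ, ∀ w : H, Tendsto (fun i => (x i ^ n) w) l (𝓝 ((T ^ n) w)) := by
    intro n
    induction n with
    | zero => intro w; simpa using tendsto_const_nhds
    | succ n ih =>
      intro w
      rw [tendsto_iff_norm_sub_tendsto_zero]
      have h1 : Tendsto (fun i => C * ‖(x i ^ n) w - (T ^ n) w‖
          + ‖x i ((T ^ n) w) - T ((T ^ n) w)‖) l (𝓝 0) := by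
        have ha := tendsto_const_nhds (x := C) (f := l) |>.mul
          ((tendsto_iff_norm_sub_tendsto_zero.mp (ih w)))
        have hb := tendsto_iff_norm_sub_tendsto_zero.mp (hsot ((T ^ n) w))
        simpa using ha.add hb
      refine squeeze_zero (fun i => norm_nonneg _) (fun i => ?_) h1
      have key : (x i ^ (n + 1)) w - (T ^ (n + 1)) w
          = x i ((x i ^ n) w - (T ^ n) w) + (x i ((T ^ n) w) - T ((T ^ n) w)) := by
        rw [pow_succ', pow_succ', ContinuousLinearMap.mul_apply,
          ContinuousLinearMap.mul_apply, map_sub]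
        abel
      rw [key]
      refine (norm_add_le _ _).trans (add_le_add_left ?_ _)
      exact ((x i).le_opNorm _).trans (mul_le_mul_of_nonneg_right (hC i) (norm_nonneg _))
  -- polynomials converge strongly
  have hpoly : ∀ (q : Polynomial ℝ) (w : H),
      Tendsto (fun i => (Polynomial.aeval (x i) q) w) l (𝓝 ((Polynomial.aeval T q) w)) := by
    intro q
    induction q using Polynomial.induction_on' with
    | add p q hp hq =>
      intro w
      simpa [map_add] using (hp w).add (hq w)
    | monomial n r =>
      intro w
      have : ∀ a : H →L[ℂ] H, (Polynomial.aeval a (Polynomial.monomial n r)) w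
          = r • ((a ^ n) w) := fun a => by
        simp [Polynomial.aeval_monomial, Algebra.algebraMap_eq_smul_one,
          ContinuousLinearMap.mul_apply]
      simp only [this]
      exact (hpow n w).const_smul r
  -- uniform polynomial approximation
  intro v
  rw [Metric.tendsto_nhds]
  intro ε hε
  have hδpos : 0 < ε / (3 * (‖v‖ + 1)) := by positivity
  set δ := ε / (3 * (‖v‖ + 1)) with hδ
  obtain ⟨q, hq⟩ := exists_polynomial_near_of_continuousOn (-C) C f hf.continuousOn δ hδpos
  have happrox : ∀ a : H →L[ℂ] H, IsSelfAdjoint a → ‖a‖ ≤ C →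
      ‖cfc f a - Polynomial.aeval a q‖ ≤ δ := by
    intro a ha haC
    have h1 : cfc f a - Polynomial.aeval a q = cfc (fun t => f t - q.eval t) a := by
      rw [cfc_sub f q.eval a, cfc_polynomial q a ha]
    rw [h1]
    refine norm_cfc_le hδpos.le fun t ht => ?_
    have h2 := hq t (hspec a haC ht)
    rw [Real.norm_eq_abs, abs_sub_comm]
    exact h2.le
  have hmid : ∀ᶠ i in l, ‖(Polynomial.aeval (x i) q) v - (Polynomial.aeval T q) v‖ < ε / 3 := by
    have := tendsto_iff_norm_sub_tendsto_zero.mp (hpoly q v)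
    have h3 : (0 : ℝ) < ε / 3 := by positivity
    simpa using (this.eventually (eventually_lt_nhds h3))
  filter_upwards [hmid] with i hi
  rw [dist_eq_norm]
  have hδv : δ * ‖v‖ ≤ ε / 3 := by
    rw [hδ, div_mul_eq_mul_div, div_le_div_iff₀ (by positivity) (by norm_num)]
    nlinarith [norm_nonneg v, hε.le]
  have e1 : ‖cfc f (x i) v - (Polynomial.aeval (x i) q) v‖ ≤ δ * ‖v‖ := by
    have := (cfc f (x i) - Polynomial.aeval (x i) q).le_opNorm v
    simpa using this.trans (mul_le_mul_of_nonneg_right (happrox _ (hx i) (hC i)) (norm_nonneg v))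
  have e3 : ‖(Polynomial.aeval T q) v - cfc f T v‖ ≤ δ * ‖v‖ := by
    have := (cfc f T - Polynomial.aeval T q).le_opNorm v
    rw [← norm_neg]
    simp only [neg_sub]
    simpa using this.trans (mul_le_mul_of_nonneg_right (happrox _ hT hTC) (norm_nonneg v))
  calc ‖cfc f (x i) v - cfc f T v‖
      ≤ ‖cfc f (x i) v - (Polynomial.aeval (x i) q) v‖
        + ‖(Polynomial.aeval (x i) q) v - (Polynomial.aeval T q) v‖
        + ‖(Polynomial.aeval T q) v - cfc f T v‖ := by
          have := norm_add₃_le (a := cfc f (x i) v - (Polynomial.aeval (x i) q) v)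
            (b := (Polynomial.aeval (x i) q) v - (Polynomial.aeval T q) v)
            (c := (Polynomial.aeval T q) v - cfc f T v)
          simpa using this
    _ < ε / 3 + ε / 3 + ε / 3 := by
          linarith [e1, e3, hi, hδv]
    _ = ε := by ring
end

section
/- Let A be a commutative unital C*-algebra isomorphic to C(X) with X a Stonean (compact, Hausdorff, extremally disconnected) space, and let a ∈ A be self-adjoint. For r ∈ ℝ, let X(a,r) be the interior of {x ∈ X : a(x) ≤ r}, and E_a(r) the (projection given by the) characteristic function of the clopen set X(a,r). Then a can be uniformly approximated by finite sums Σ_k r_k (E_a(r_{k+1}) − E_a(r_k)): for every ε > 0 there is a partition m = r₁ < ⋯ < r_{n+1} = M of the range of a with mesh < ε such that ‖a − Σ_{k=1}^n r_k (E_a(r_{k+1}) − E_a(r_k))‖ ≤ ε. -/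
open scoped Classical

/-- **Uniform Riemann–Stieltjes approximation by spectral projections in `C(X)`,
`X` Stonean.**  Let `X` be a Stonean (compact Hausdorff extremally disconnected)
space and `a ∈ C(X, ℂ)` self-adjoint (i.e. real-valued).  For `r : ℝ`, let
`X(a,r)` be the interior of `{x | a x ≤ r}` and `E_a(r)` the characteristic
function of the clopen set `X(a,r)` (a projection in `C(X)`).  Then `a` is
uniformly approximated by the finite sums `Σ_k r_k (E_a(r_{k+1}) − E_a(r_k))`:
for every `ε > 0` there is a partition `m = r₀ < ⋯ < r_{n+1} = M` of the range of
`a` with mesh `< ε` such that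
`‖a − Σ_k r_k (E_a(r_{k+1}) − E_a(r_k))‖ ≤ ε`. -/
theorem stonean_spectral_approximation
    {X : Type*} [TopologicalSpace X] [CompactSpace X] [T2Space X]
    [ExtremallyDisconnected X] [Nonempty X]
    (a : C(X, ℂ)) (ha : IsSelfAdjoint a)
    (E : ℝ → C(X, ℂ))
    (hE : ∀ r : ℝ, ∀ x : X,
      E r x = if x ∈ interior {y : X | (a y).re ≤ r} then 1 else 0) :
    ∀ ε > (0 : ℝ), ∃ (n : ℕ) (r : Fin (n + 2) → ℝ),
      StrictMono r ∧
      (∀ x : X, r 0 ≤ (a x).re ∧ (a x).re ≤ r (Fin.last (n + 1))) ∧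
      (∀ k : Fin (n + 1), r k.succ - r k.castSucc < ε) ∧
      ‖a - ∑ k : Fin (n + 1),
        (r k.castSucc : ℂ) • (E (r k.succ) - E (r k.castSucc))‖ ≤ ε := by
  intro ε hε
  have hf : Continuous fun x : X => (a x).re := Complex.continuous_re.comp a.continuous
  obtain ⟨x₀, -, hm'⟩ := isCompact_univ.exists_isMinOn Set.univ_nonempty hf.continuousOn
  obtain ⟨x₁, -, hM'⟩ := isCompact_univ.exists_isMaxOn Set.univ_nonempty hf.continuousOn
  have hm : ∀ y : X, (a x₀).re ≤ (a y).re := fun y => hm' (Set.mem_univ y)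
  have hM : ∀ y : X, (a y).re ≤ (a x₁).re := fun y => hM' (Set.mem_univ y)
  set m : ℝ := (a x₀).re with hm_def
  set M : ℝ := (a x₁).re with hM_def
  have hmM : m ≤ M := hm x₁
  set L : ℝ := M - m + ε with hL_def
  have hL : 0 < L := by linarith
  set n : ℕ := ⌈L / ε⌉₊ with hn_def
  set d : ℝ := L / (n + 1) with hd_def
  have hn1 : (0:ℝ) < (n : ℝ) + 1 := by positivity
  have hd : 0 < d := by positivity
  have hdε : d < ε := by
    rw [hd_def, div_lt_iff₀ hn1]
    have h1 : L / ε ≤ (n : ℝ) := Nat.le_ceil _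
    have h2 : L / ε < (n : ℝ) + 1 := by linarith
    calc L = (L / ε) * ε := by field_simp
      _ < ((n:ℝ) + 1) * ε := by exact mul_lt_mul_of_pos_right h2 hε
      _ = ε * ((n:ℝ) + 1) := by ring
  set rr : ℕ → ℝ := fun k => (m - ε / 2) + k * d with hrr_def
  have hrr_step : ∀ k : ℕ, rr (k + 1) - rr k = d := by
    intro k; simp only [hrr_def]; push_cast; ring
  have hrr_mono : StrictMono rr := by
    apply strictMono_nat_of_lt_succ
    intro k
    have := hrr_step k
    linarith
  have hrr_top : rr (n + 1) = M + ε / 2 := by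
    simp only [hrr_def, hd_def]
    push_cast
    field_simp
    ring
  refine ⟨n, fun k => rr k, ?_, ?_, ?_, ?_⟩
  · intro i j hij
    exact hrr_mono (by exact_mod_cast hij)
  · intro x
    constructor
    · have : m ≤ (a x).re := hm x
      simp only [hrr_def]
      push_cast
      norm_num
      linarith
    · have : (a x).re ≤ M := hM x
      simp only [Fin.val_last, hrr_top]
      linarith
  · intro k
    have : rr ((k : ℕ) + 1) - rr (k : ℕ) = d := hrr_step k
    simpa [Fin.val_succ, Fin.coe_castSucc] using lt_of_le_of_lt (le_of_eq this) hdε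
  · -- the norm estimate
    rw [ContinuousMap.norm_le _ (le_of_lt hε)]
    intro x
    -- real-valuedness
    have him : (a x).im = 0 := by
      have h := congrArg (fun f : C(X, ℂ) => f x) ha
      simp only [ContinuousMap.coe_star, Pi.star_apply, RCLike.star_def] at h
      have h2 := congrArg Complex.im h
      simp only [Complex.conj_im] at h2
      linarith
    -- the crossing index
    set P : ℕ → Prop := fun k => x ∈ interior {y : X | (a y).re ≤ rr k} with hP_def
    have hPmono : ∀ {i j : ℕ}, i ≤ j → P i → P j := by
      intro i j hij hi
      exact interior_mono (fun y hy => le_trans hy (hrr_mono.monotone hij)) hi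
    have hP0 : ¬ P 0 := by
      intro h
      have h1 : x ∈ {y : X | (a y).re ≤ rr 0} := interior_subset h
      simp only [Set.mem_setOf_eq] at h1
      have h2 : m ≤ (a x).re := hm x
      simp only [hrr_def, Nat.cast_zero, zero_mul, add_zero] at h1
      linarith
    have hPtop : P (n + 1) := by
      have : {y : X | (a y).re ≤ rr (n + 1)} = Set.univ := by
        apply Set.eq_univ_of_forall
        intro y
        have : (a y).re ≤ M := hM y
        simp only [Set.mem_setOf_eq, hrr_top]
        linarith
      simp [hP_def, this]
    have hex : ∃ k, P k := ⟨n + 1, hPtop⟩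
    set j : ℕ := Nat.find hex with hj_def
    have hPj : P j := Nat.find_spec hex
    have hjmin : ∀ i, i < j → ¬ P i := fun i hi => Nat.find_min hex hi
    have hj1 : 1 ≤ j := by
      rcases Nat.eq_zero_or_pos j with h | h
      · exact absurd (h ▸ hPj) hP0
      · exact h
    have hjle : j ≤ n + 1 := Nat.find_le hPtop
    -- evaluate the sum
    set k₀ : Fin (n + 1) := ⟨j - 1, by omega⟩ with hk₀_def
    have hsum : (∑ k : Fin (n + 1),
        (rr (k.castSucc : ℕ) : ℂ) • (E (rr (k.succ : ℕ)) - E (rr (k.castSucc : ℕ)))) x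
        = ((rr (j - 1) : ℝ) : ℂ) := by
      rw [ContinuousMap.coe_sum, Finset.sum_apply]
      have key : ∀ k : Fin (n + 1),
          ((rr (k.castSucc : ℕ) : ℂ) • (E (rr (k.succ : ℕ)) - E (rr (k.castSucc : ℕ)))) x
            = if k = k₀ then ((rr (j - 1) : ℝ) : ℂ) else 0 := by
        intro k
        have hcs : ((k.castSucc : Fin (n+2)) : ℕ) = (k : ℕ) := rfl
        have hsc : ((k.succ : Fin (n+2)) : ℕ) = (k : ℕ) + 1 := rfl
        simp only [ContinuousMap.smul_apply, ContinuousMap.sub_apply, hE, hcs, hsc,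
          smul_eq_mul]
        by_cases hk : P (k : ℕ)
        · -- both indicators are 1
          have hk1 : P ((k : ℕ) + 1) := hPmono (Nat.le_succ _) hk
          have hkne : k ≠ k₀ := by
            intro h
            have : (k : ℕ) = j - 1 := by rw [h]
            have : (k : ℕ) < j := by omega
            exact hjmin _ this hk
          simp [hP_def] at hk hk1
          simp [hk, hk1, hkne]
        · by_cases hk1 : P ((k : ℕ) + 1)
          · -- crossing: j = k + 1
            have hjk : j ≤ (k : ℕ) + 1 := Nat.find_le hk1
            have hjk' : (k : ℕ) < j := by
              by_contra h
              exact hk (hPmono (by omega) hPj)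
            have hkeq : k = k₀ := by
              apply Fin.ext
              simp only [hk₀_def]
              omega
            have hval : (k : ℕ) = j - 1 := by omega
            rw [hval] at hk hk1
            simp only [hP_def] at hk hk1
            simp [hk, hk1, hkeq, hk₀_def]
          · have hkne : k ≠ k₀ := by
              intro h
              have hv : (k : ℕ) = j - 1 := by rw [h]
              have : j ≤ (k : ℕ) + 1 := by omega
              exact hk1 (hPmono this hPj)
            simp only [hP_def] at hk hk1
            simp [hk, hk1, hkne]
      rw [Finset.sum_congr rfl (fun k _ => key k)]
      simp
    -- pointwise estimate
    have hax : a x = ((a x).re : ℂ) := by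
      apply Complex.ext <;> simp [him]
    have hupper : (a x).re ≤ rr j := by
      have h1 : x ∈ {y : X | (a y).re ≤ rr j} := interior_subset hPj
      simpa only [Set.mem_setOf_eq] using h1
    have hlower : rr (j - 1) ≤ (a x).re := by
      by_contra h
      push_neg at h
      have hopen : IsOpen {y : X | (a y).re < rr (j - 1)} := isOpen_lt hf continuous_const
      have hsub : {y : X | (a y).re < rr (j - 1)} ⊆ interior {y : X | (a y).re ≤ rr (j - 1)} :=
        interior_maximal (Set.setOf_subset_setOf.mpr (fun y => le_of_lt)) hopen
      exact hjmin (j - 1) (by omega) (hsub (show x ∈ {y : X | (a y).re < rr (j - 1)} from h))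
    have hstep : rr j - rr (j - 1) = d := by
      have : j - 1 + 1 = j := by omega
      calc rr j - rr (j - 1) = rr (j - 1 + 1) - rr (j - 1) := by rw [this]
        _ = d := hrr_step _
    rw [ContinuousMap.sub_apply, hsum, hax, ← Complex.ofReal_sub, Complex.norm_real, Real.norm_eq_abs, abs_le]
    constructor <;> [skip; skip] <;> nlinarith [hstep, hlower, hupper, hdε]
end

section
/- Let X be a Stonean space, a ∈ C(X) real-valued, and for r ∈ ℝ let E_a(r) ∈ C(X) be the characteristic function of the interior of {x : a(x) ≤ r}. Then r ↦ E_a(r) is monotone increasing and order-continuous from above: for every r₀, the projection E_a(r₀) is the infimum in the projection lattice of C(X) of {E_a(r) : r > r₀}. -/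
open scoped Classical

/-- Let `X` be a Stonean space, `a ∈ C(X)` real-valued, and for `r : ℝ` let
`E_a(r) ∈ C(X)` be the characteristic function of the interior of `{x | a x ≤ r}`.
Then `r ↦ E_a(r)` is monotone increasing, and it is order-continuous from above:
for every `r₀`, the projection `E_a(r₀)` is the infimum, in the projection lattice
of `C(X)`, of the family `{E_a(r) : r > r₀}`. -/
theorem stonean_spectral_family_monotone_and_continuous_from_above
    {X : Type*} [TopologicalSpace X] [CompactSpace X] [T2Space X]
    [ExtremallyDisconnected X]
    (a : C(X, ℝ))
    (E : ℝ → C(X, ℝ))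
    (hE : ∀ r : ℝ, ∀ x : X,
      E r x = if x ∈ interior {y : X | a y ≤ r} then 1 else 0) :
    Monotone E ∧
    ∀ r₀ : ℝ,
      (∀ r : ℝ, r₀ < r → E r₀ ≤ E r) ∧
      (∀ p : C(X, ℝ), IsSelfAdjoint p → IsIdempotentElem p →
        (∀ r : ℝ, r₀ < r → p ≤ E r) → p ≤ E r₀) := by
  have hle : ∀ r s : ℝ, r ≤ s → E r ≤ E s := by
    intro r s hrs
    rw [ContinuousMap.le_def]
    intro x
    rw [hE r x, hE s x]
    by_cases hx : x ∈ interior {y : X | a y ≤ r}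
    · have hx' : x ∈ interior {y : X | a y ≤ s} :=
        interior_mono (fun y hy => le_trans hy hrs) hx
      simp [hx, hx']
    · simp only [hx, if_false]
      split <;> norm_num
  refine ⟨fun r s h => hle r s h, fun r₀ => ⟨fun r h => hle r₀ r h.le, ?_⟩⟩
  intro p _ hid hp
  have hdich : ∀ y : X, p y = 0 ∨ p y = 1 := by
    intro y
    have h : p y * p y = p y := by
      have := congrArg (fun f : C(X, ℝ) => f y) hid
      simpa using this
    have h2 : p y * (p y - 1) = 0 := by linear_combination h
    rcases mul_eq_zero.mp h2 with h0 | h1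
    · exact Or.inl h0
    · exact Or.inr (by linarith)
  rw [ContinuousMap.le_def]
  intro x
  rcases hdich x with hx | hx
  · rw [hx, hE r₀ x]
    split <;> norm_num
  · -- p x = 1; show x ∈ interior {a ≤ r₀}
    set U : Set X := p ⁻¹' Set.Ioi (1/2 : ℝ) with hU
    have hUopen : IsOpen U := isOpen_Ioi.preimage p.continuous
    have hUsub : U ⊆ {y : X | a y ≤ r₀} := by
      intro y hy
      have hpy : p y = 1 := by
        rcases hdich y with h0 | h1
        · exfalso
          have : (1/2 : ℝ) < p y := hy
          rw [h0] at this; norm_num at this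
        · exact h1
      -- a y ≤ r for all r > r₀
      by_contra hay
      simp only [Set.mem_setOf_eq, not_le] at hay
      set r : ℝ := (r₀ + a y) / 2 with hr
      have hr₀r : r₀ < r := by simp only [hr]; linarith
      have hray : r < a y := by simp only [hr]; linarith
      have h1 : p y ≤ E r y := (ContinuousMap.le_def.mp (hp r hr₀r)) y
      rw [hpy, hE r y] at h1
      split at h1
      · next hmem =>
          have hmem2 : y ∈ {z : X | a z ≤ r} := interior_subset hmem
          have : a y ≤ r := hmem2
          linarith
      · norm_num at h1
    have hxU : x ∈ U := by
      simp only [hU, Set.mem_preimage, Set.mem_Ioi, hx]; norm_num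
    have hxint : x ∈ interior {y : X | a y ≤ r₀} :=
      interior_maximal hUsub hUopen hxU
    rw [hx, hE r₀ x, if_pos hxint]
end

section
/- Let A be a Type II₁ AW*-factor with canonical (normalized, faithful, completely additive on projections) quasitrace τ, and let M be a MASA of A. For every projection q ∈ M and every real number t ∈ [0, τ(q)], there exists a projection q' ∈ M with q' ≤ q and τ(q') = t. -/
variable {A : Type*} [CStarAlgebra A]

/-- `a` is a projection: a self-adjoint idempotent. -/
def IsProjection (a : A) : Prop := IsSelfAdjoint a ∧ IsIdempotentElem a

/-- The order on projections: `p ≤ q` iff `p * q = p`. -/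
def ProjLE (p q : A) : Prop := p * q = p

/-- `p` is the least upper bound of a set `S` of projections, in the projection
order. -/
def IsLUBProj (S : Set A) (p : A) : Prop :=
  IsProjection p ∧ (∀ q ∈ S, ProjLE q p) ∧
    ∀ r : A, IsProjection r → (∀ q ∈ S, ProjLE q r) → ProjLE p r

/-- `M` is a MASA of `A`: a maximal commutative C*-subalgebra. -/
def IsMasa (M : StarSubalgebra ℂ A) : Prop :=
  IsClosed (M : Set A) ∧ (∀ x ∈ M, ∀ y ∈ M, x * y = y * x) ∧
  ∀ N : StarSubalgebra ℂ A, IsClosed (N : Set A) →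
    (∀ x ∈ N, ∀ y ∈ N, x * y = y * x) → M ≤ N → N = M

/-- `A` is an AW*-algebra: every set of pairwise orthogonal projections has a
least upper bound among projections, and every MASA is the norm-closed linear
span of its projections. -/
def IsAWStar (A : Type*) [CStarAlgebra A] : Prop :=
  (∀ S : Set A, (∀ p ∈ S, IsProjection p) →
    (S.Pairwise fun p q => p * q = 0) → ∃ p : A, IsLUBProj S p) ∧
  (∀ M : StarSubalgebra ℂ A, IsMasa M →
    closure (↑(Submodule.span ℂ {x : A | x ∈ M ∧ IsProjection x}) : Set A)
      = (M : Set A))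

/-- `A` is a factor: it has trivial centre. -/
def IsFactor (A : Type*) [CStarAlgebra A] : Prop :=
  ∀ z : A, (∀ a : A, z * a = a * z) → ∃ c : ℂ, z = c • (1 : A)

/-- `A` is finite: `x*x = 1` implies `xx* = 1`. -/
def IsFiniteCStar (A : Type*) [CStarAlgebra A] : Prop :=
  ∀ x : A, star x * x = 1 → x * star x = 1

/-- `A` is continuous: `0` is the only projection `p` with `pAp` abelian. -/
def IsContinuousCStar (A : Type*) [CStarAlgebra A] : Prop :=
  ∀ p : A, IsProjection p →
    (∀ x y : A, (p * x * p) * (p * y * p) = (p * y * p) * (p * x * p)) → p = 0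

/-- `A` is a Type II₁ AW*-factor: an AW*-algebra with trivial centre that is
continuous and finite. -/
def IsTypeII1AWFactor (A : Type*) [CStarAlgebra A] : Prop :=
  IsAWStar A ∧ IsFactor A ∧ IsContinuousCStar A ∧ IsFiniteCStar A

namespace MasaProof


lemma proj_zero : IsProjection (0 : A) := ⟨by simp [IsSelfAdjoint], by simp [IsIdempotentElem]⟩

lemma proj_star {p : A} (hp : IsProjection p) : star p = p := hp.1

lemma orth_symm {p q : A} (hp : IsProjection p) (hq : IsProjection q) (h : p * q = 0) :
    q * p = 0 := by
  have := congrArg star h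
  rwa [star_mul, proj_star hp, proj_star hq, star_zero] at this

lemma projLE_rev {p q : A} (hp : IsProjection p) (hq : IsProjection q) (h : ProjLE p q) :
    q * p = p := by
  have := congrArg star h
  rwa [star_mul, proj_star hp, proj_star hq] at this

lemma projLE_antisymm {p q : A} (hp : IsProjection p) (hq : IsProjection q)
    (h1 : ProjLE p q) (h2 : ProjLE q p) : p = q := by
  have h3 : p * q = q := projLE_rev hq hp h2
  have h1' : p * q = p := h1
  exact h1'.symm.trans h3

lemma proj_add {p q : A} (hp : IsProjection p) (hq : IsProjection q) (h : p * q = 0) :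
    IsProjection (p + q) := by
  refine ⟨hp.1.add hq.1, ?_⟩
  have h' := orth_symm hp hq h
  unfold IsIdempotentElem
  rw [add_mul, mul_add, mul_add, hp.2, hq.2, h, h']
  abel

lemma proj_sub {p q : A} (hp : IsProjection p) (hq : IsProjection q) (h : ProjLE p q) :
    IsProjection (q - p) ∧ p * (q - p) = 0 ∧ ProjLE (q - p) q := by
  have h' := projLE_rev hp hq h
  have horth : p * (q - p) = 0 := by rw [mul_sub, h, hp.2, sub_self]
  have horth' : (q - p) * p = 0 := by rw [sub_mul, h', hp.2, sub_self]
  have h0 : p * q = p := h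
  refine ⟨⟨hq.1.sub hp.1, ?_⟩, horth, ?_⟩
  · unfold IsIdempotentElem
    rw [sub_mul, mul_sub, mul_sub, hq.2, h0, h', hp.2]; abel
  · show (q - p) * q = q - p
    rw [sub_mul, hq.2, h0]

lemma lub_unique {S : Set A} {P Q : A} (hP : IsLUBProj S P) (hQ : IsLUBProj S Q) : P = Q :=
  projLE_antisymm hP.1 hQ.1 (hP.2.2 Q hQ.1 hQ.2.1) (hQ.2.2 P hP.1 hP.2.1)

/-- The commutant trick: a selfadjoint element commuting with a masa lies in it. -/
lemma mem_of_commute {M : StarSubalgebra ℂ A} (hM : IsMasa M) {a : A}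
    (ha : IsSelfAdjoint a) (hc : ∀ m ∈ M, a * m = m * a) : a ∈ M := by
  set s : Set A := insert a (M : Set A) with hs
  have hstar : ∀ x ∈ s, star x ∈ s := by
    rintro x (rfl | hx)
    · exact Or.inl ha
    · exact Or.inr (star_mem hx)
  have hgen : ∀ x ∈ s, ∀ y ∈ s, x * y = y * x := by
    rintro x (rfl | hx) y (rfl | hy)
    · rfl
    · exact hc y hy
    · exact (hc x hx).symm
    · exact hM.2.1 x hx y hy
  set N := StarAlgebra.adjoin ℂ s with hN
  -- every element of N commutes with every generator
  have step1 : ∀ x ∈ N, ∀ g ∈ s, x * g = g * x := by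
    intro x hx
    induction hx using StarAlgebra.adjoin_induction with
    | mem z hz => exact hgen z hz
    | algebraMap r => intro g _; exact (Algebra.commutes r g)
    | add x y hx hy ihx ihy =>
        intro g hg
        rw [add_mul, mul_add, ihx g hg, ihy g hg]
    | mul x y hx hy ihx ihy =>
        intro g hg
        rw [mul_assoc, ihy g hg, ← mul_assoc, ihx g hg, mul_assoc]
    | star x hx ih =>
        intro g hg
        have := congrArg star (ih (star g) (hstar g hg))
        simpa [star_mul] using this.symm
  have step2 : ∀ y ∈ N, ∀ x ∈ N, x * y = y * x := by
    intro y hy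
    induction hy using StarAlgebra.adjoin_induction with
    | mem z hz => intro x hx; exact step1 x hx z hz
    | algebraMap r => intro x _; exact (Algebra.commutes r x).symm
    | add y z hy hz ihy ihz =>
        intro x hx
        rw [mul_add, add_mul, ihy x hx, ihz x hx]
    | mul y z hy hz ihy ihz =>
        intro x hx
        rw [← mul_assoc, ihy x hx, mul_assoc, ihz x hx, ← mul_assoc]
    | star y hy ih =>
        intro x hx
        have := congrArg star (ih (star x) (star_mem hx))
        simpa [star_mul] using this.symm
  set Nc := N.topologicalClosure with hNc
  have hclosed : IsClosed (Nc : Set A) := StarSubalgebra.isClosed_topologicalClosure N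
  have hcomm : ∀ x ∈ Nc, ∀ y ∈ Nc, x * y = y * x := by
    intro x hx y hy
    have hx' : x ∈ closure (N : Set A) := hx
    have hy' : y ∈ closure (N : Set A) := hy
    -- first freeze y ∈ N, then pass to the closure in both variables
    have key : ∀ y ∈ (N : Set A), ∀ x ∈ closure (N : Set A), x * y = y * x := by
      intro y hyN
      have : IsClosed {x : A | x * y = y * x} :=
        isClosed_eq (by fun_prop) (by fun_prop)
      intro x hx
      exact closure_minimal (fun z hz => step2 y hyN z hz) this hx
    have : IsClosed {y : A | x * y = y * x} := isClosed_eq (by fun_prop) (by fun_prop)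
    exact closure_minimal (fun z hz => (key z hz x hx)) this hy'
  have hle : M ≤ Nc := fun m hm =>
    StarSubalgebra.le_topologicalClosure N (StarAlgebra.subset_adjoin ℂ s (Or.inr hm))
  have := hM.2.2 Nc hclosed hcomm hle
  rw [← this]
  exact StarSubalgebra.le_topologicalClosure N (StarAlgebra.subset_adjoin ℂ s (Or.inl rfl))


section Tau
variable (τ : A → ℂ)
variable (hCAP : ∀ (ι : Type) (p : ι → A), (∀ i, IsProjection (p i)) →
      (Pairwise fun i j => p i * p j = 0) →
      ∀ P : A, IsLUBProj (Set.range p) P → HasSum (fun i => τ (p i)) (τ P))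

include hCAP

lemma tau_zero : τ 0 = 0 := by
  have h : HasSum (fun _ : Bool => τ (0 : A)) (τ (0 : A)) := by
    refine hCAP Bool (fun _ => 0) (fun _ => proj_zero) (fun i j _ => by simp) 0 ?_
    refine ⟨proj_zero, ?_, ?_⟩
    · rintro q ⟨b, rfl⟩; show (0:A) * 0 = 0; simp
    · intro r _ _; show (0:A) * r = 0; simp
  have h2 : HasSum (fun _ : Bool => τ (0 : A)) (τ (0:A) + τ (0:A)) := by
    have := hasSum_fintype (fun _ : Bool => τ (0 : A))
    simpa [two_mul] using this
  have := h.unique h2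
  linear_combination -this

lemma tau_add {p q : A} (hp : IsProjection p) (hq : IsProjection q) (h : p * q = 0) :
    τ (p + q) = τ p + τ q := by
  have h' := orth_symm hp hq h
  have hsum : HasSum (fun b : Bool => τ (if b then q else p)) (τ (p + q)) := by
    refine hCAP Bool (fun b => if b then q else p) (fun b => by cases b <;> simpa)
      (fun i j hij => ?_) (p + q) ⟨proj_add hp hq h, ?_, ?_⟩
    · cases i <;> cases j <;> simp_all
    · rintro z ⟨b, rfl⟩
      cases b
      · show p * (p + q) = p; rw [mul_add, hp.2, h, add_zero]
      · show q * (p + q) = q; rw [mul_add, hq.2, h', zero_add]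
    · intro r _ hub
      have h1 : p * r = p := hub p ⟨false, rfl⟩
      have h2 : q * r = q := hub q ⟨true, rfl⟩
      show (p + q) * r = p + q
      rw [add_mul, h1, h2]
  have h2 : HasSum (fun b : Bool => τ (if b then q else p)) (τ p + τ q) := by
    have := hasSum_fintype (fun b : Bool => τ (if b then q else p))
    simpa [add_comm] using this
  exact hsum.unique h2

end Tau

/-- If all elements of `S` are projections in `M` and `P` is an LUB of `S`,
then `P ∈ M`. -/
lemma lub_mem {M : StarSubalgebra ℂ A} (hM : IsMasa M)
    (hAW2 : closure (↑(Submodule.span ℂ {x : A | x ∈ M ∧ IsProjection x}) : Set A)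
      = (M : Set A))
    {S : Set A} (hSM : ∀ x ∈ S, x ∈ M) (hSp : ∀ x ∈ S, IsProjection x)
    {P : A} (hP : IsLUBProj S P) : P ∈ M := by
  -- Step 1: P commutes with every projection r in M.
  have step1 : ∀ r ∈ M, IsProjection r → P * r = r * P := by
    intro r hrM hr
    set u : A := 1 - (r + r) with hu
    have hrr : r * r = r := hr.2
    have huu : u * u = 1 := by
      have key : u * u = 1 - (r + r) - (r + r) + ((r*r + r*r) + (r*r + r*r)) := by
        rw [hu]; noncomm_ring
      rw [key, hrr]; abel
    have hsu : ∀ s ∈ S, u * s * u = s := by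
      intro s hs
      have hcomm : r * s = s * r := hM.2.1 r hrM s (hSM s hs)
      have hrsr : r * s * r = r * s := by
        rw [mul_assoc, ← hcomm, ← mul_assoc, hrr]
      have key : u * s * u
          = s - ((r*s + r*s) + (s*r + s*r)) + ((r*s*r + r*s*r) + (r*s*r + r*s*r)) := by
        rw [hu]; noncomm_ring
      rw [key, hrsr, ← hcomm]; abel
    have hsu' : ∀ s ∈ S, u * s = s * u := by
      intro s hs
      have h1 := hsu s hs
      have : u * s * u * u = s * u := by rw [h1]
      rwa [mul_assoc, huu, mul_one] at this
    -- u * P * u is also an LUB of S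
    have hP' : IsLUBProj S (u * P * u) := by
      have hu_sa : star u = u := by
        rw [hu]; simp [proj_star hr, star_sub, star_add]
      have hPP : P * P = P := hP.1.2
      refine ⟨⟨?_, ?_⟩, ?_, ?_⟩
      · show star (u * P * u) = u * P * u
        rw [star_mul, star_mul, hu_sa, proj_star hP.1, mul_assoc]
      · show (u * P * u) * (u * P * u) = u * P * u
        calc (u * P * u) * (u * P * u) = u * (P * (u * u) * P) * u := by noncomm_ring
          _ = u * (P * P) * u := by rw [huu, mul_one]
          _ = u * P * u := by rw [hPP]
      · intro s hs
        have h1 : s * P = s := hP.2.1 s hs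
        show s * (u * P * u) = s
        calc s * (u * P * u) = (s * u) * P * u := by noncomm_ring
          _ = (u * s) * P * u := by rw [hsu' s hs]
          _ = u * (s * P) * u := by noncomm_ring
          _ = u * s * u := by rw [h1]
          _ = s := hsu s hs
      · intro r' hr' hub
        have hub' : ∀ s ∈ S, ProjLE s (u * r' * u) := by
          intro s hs
          have h1 : s * r' = s := hub s hs
          show s * (u * r' * u) = s
          calc s * (u * r' * u) = (s * u) * r' * u := by noncomm_ring
            _ = (u * s) * r' * u := by rw [hsu' s hs]
            _ = u * (s * r') * u := by noncomm_ring
            _ = u * s * u := by rw [h1]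
            _ = s := hsu s hs
        have hur'u : IsProjection (u * r' * u) := by
          have hu_sa : star u = u := by
            rw [hu]; simp [proj_star hr, star_sub, star_add]
          refine ⟨?_, ?_⟩
          · show star (u * r' * u) = u * r' * u
            rw [star_mul, star_mul, hu_sa, proj_star hr', mul_assoc]
          · show (u * r' * u) * (u * r' * u) = u * r' * u
            calc (u * r' * u) * (u * r' * u) = u * (r' * (u * u) * r') * u := by noncomm_ring
              _ = u * (r' * r') * u := by rw [huu, mul_one]
              _ = u * r' * u := by rw [hr'.2]
        have hmin : P * (u * r' * u) = P := hP.2.2 _ hur'u hub'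
        show (u * P * u) * r' = u * P * u
        calc (u * P * u) * r' = ((u * P * u) * r') * 1 := (mul_one _).symm
          _ = ((u * P * u) * r') * (u * u) := by rw [huu]
          _ = u * (P * (u * r' * u)) * u := by noncomm_ring
          _ = u * P * u := by rw [hmin]
    have hequ : u * P * u = P := projLE_antisymm hP'.1 hP.1
      (hP'.2.2 _ hP.1 hP.2.1) (hP.2.2 _ hP'.1 hP'.2.1)
    -- hence u commutes with P, hence r does
    have hcPu : u * P = P * u := by
      have : u * (u * P * u) = u * P := by rw [hequ]
      have h2 : u * (u * P * u) = P * u := by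
        rw [← mul_assoc, ← mul_assoc, huu, one_mul]
      rw [← this, h2]
    have h1 : P * (1 - (r + r)) = (1 - (r + r)) * P := by rw [← hu, hcPu.symm]
    have h2 : P - P * (r + r) = P - (r + r) * P := by
      calc P - P * (r + r) = P * (1 - (r + r)) := by noncomm_ring
        _ = (1 - (r + r)) * P := h1
        _ = P - (r + r) * P := by noncomm_ring
    have h3 : P * (r + r) = (r + r) * P := by
      have := sub_right_injective h2
      exact this
    have h4 : (2 : ℂ) • (P * r) = (2 : ℂ) • (r * P) := by
      rw [two_smul, two_smul]
      calc P * r + P * r = P * (r + r) := by noncomm_ring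
        _ = (r + r) * P := h3
        _ = r * P + r * P := by noncomm_ring
    exact smul_right_injective A (two_ne_zero) h4
  -- Step 2: P commutes with everything in M.
  have step2 : ∀ m ∈ M, P * m = m * P := by
    have hCs : ∀ x ∈ (Submodule.span ℂ {x : A | x ∈ M ∧ IsProjection x} : Submodule ℂ A),
        P * x = x * P := by
      intro x hx
      induction hx using Submodule.span_induction with
      | mem z hz => exact step1 z hz.1 hz.2
      | zero => simp
      | add x y hx hy ihx ihy => rw [mul_add, add_mul, ihx, ihy]
      | smul c x hx ih => rw [mul_smul_comm, smul_mul_assoc, ih]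
    have hclosed : IsClosed {x : A | P * x = x * P} := isClosed_eq (by fun_prop) (by fun_prop)
    intro m hm
    have : m ∈ closure (↑(Submodule.span ℂ {x : A | x ∈ M ∧ IsProjection x}) : Set A) := by
      rw [hAW2]; exact hm
    exact closure_minimal hCs hclosed this
  exact mem_of_commute hM hP.1.1 step2

/-- A minimal projection of a masa in a continuous AW*-algebra is zero. -/
lemma min_proj_eq_zero {M : StarSubalgebra ℂ A} (hM : IsMasa M)
    (hAW2 : closure (↑(Submodule.span ℂ {x : A | x ∈ M ∧ IsProjection x}) : Set A)
      = (M : Set A))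
    (hcont : IsContinuousCStar A)
    {e : A} (heM : e ∈ M) (he : IsProjection e)
    (hmin : ∀ f ∈ M, IsProjection f → ProjLE f e → f = 0 ∨ f = e) : e = 0 := by
  have hee : e * e = e := he.2
  -- e M e ⊆ ℂ e
  have hcorner : ∀ m ∈ M, ∃ c : ℂ, e * m * e = c • e := by
    set W : Submodule ℂ A := Submodule.span ℂ {e} with hW
    have hWclosed : IsClosed (W : Set A) := Submodule.closed_of_finiteDimensional W
    have hcont' : Continuous (fun x : A => e * x * e) := by fun_prop
    set V : Submodule ℂ A :=
      { carrier := {x : A | e * x * e ∈ W}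
        add_mem' := by
          intro x y hx hy
          simp only [Set.mem_setOf_eq] at *
          have : e * (x + y) * e = e * x * e + e * y * e := by noncomm_ring
          rw [this]; exact W.add_mem hx hy
        zero_mem' := by simp only [Set.mem_setOf_eq, mul_zero, zero_mul]; exact W.zero_mem
        smul_mem' := by
          intro c x hx
          simp only [Set.mem_setOf_eq] at *
          have : e * (c • x) * e = c • (e * x * e) := by
            rw [mul_smul_comm, smul_mul_assoc]
          rw [this]; exact W.smul_mem c hx } with hV
    have hVclosed : IsClosed (V : Set A) := hWclosed.preimage hcont'
    -- generators (projections of M) are in V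
    have hgen : {x : A | x ∈ M ∧ IsProjection x} ⊆ (V : Set A) := by
      rintro r ⟨hrM, hr⟩
      show e * r * e ∈ W
      have herM : e * r ∈ M := mul_mem heM hrM
      have hcomm : e * r = r * e := hM.2.1 e heM r hrM
      have herp : IsProjection (e * r) := by
        constructor
        · show star (e * r) = e * r
          rw [star_mul, proj_star hr, proj_star he, ← hcomm]
        · show (e * r) * (e * r) = e * r
          rw [mul_assoc, ← mul_assoc r e r, ← hcomm, mul_assoc, hr.2, ← mul_assoc, hee]
      have herle : ProjLE (e * r) e := by
        show (e * r) * e = e * r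
        rw [hcomm, mul_assoc, hee]
      have heq : e * r * e = e * r := herle
      rcases hmin (e * r) herM herp herle with h0 | h1
      · rw [heq, h0]; exact W.zero_mem
      · rw [heq, h1]; exact Submodule.mem_span_singleton_self e
    -- hence span ⊆ V, hence (closure =) M ⊆ V
    have hspan : (Submodule.span ℂ {x : A | x ∈ M ∧ IsProjection x}) ≤ V :=
      Submodule.span_le.2 hgen
    intro m hm
    have hmV : m ∈ V := by
      have : m ∈ closure (↑(Submodule.span ℂ {x : A | x ∈ M ∧ IsProjection x}) : Set A) := by
        rw [hAW2]; exact hm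
      exact closure_minimal hspan hVclosed this
    have : e * m * e ∈ W := hmV
    rcases Submodule.mem_span_singleton.1 this with ⟨c, hc⟩
    exact ⟨c, hc.symm⟩
  -- every element of eAe commutes with M, hence lies in ℂe
  have hcomm_eAe : ∀ x : A, x = e * x * e → ∀ m ∈ M, x * m = m * x := by
    intro x hx m hm
    obtain ⟨c, hc⟩ := hcorner m hm
    have heme : e * m = e * m * e := by
      have hcm : e * m = m * e := hM.2.1 e heM m hm
      rw [hcm, mul_assoc, hee]
    have hme : m * e = e * m * e := by
      have hcm : e * m = m * e := hM.2.1 e heM m hm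
      rw [← hcm]; exact heme
    have hxe : x * e = x := by
      conv_lhs => rw [hx]
      rw [mul_assoc (e * x) e e, hee]
      exact hx.symm
    have hex : e * x = x := by
      conv_lhs => rw [hx]
      rw [← mul_assoc, ← mul_assoc, hee]
      exact hx.symm
    calc x * m = x * (e * m) := by rw [← mul_assoc, hxe]
      _ = x * (c • e) := by rw [heme, hc]
      _ = c • x := by rw [mul_smul_comm, hxe]
      _ = (c • e) * x := by rw [smul_mul_assoc, hex]
      _ = (m * e) * x := by rw [hme, hc]
      _ = m * x := by rw [mul_assoc, hex]
  -- selfadjoint elements of eAe lie in ℂe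
  have hsa_scalar : ∀ x : A, x = e * x * e → IsSelfAdjoint x → ∃ c : ℂ, x = c • e := by
    intro x hx hsa
    have hxm := hcomm_eAe x hx
    have hxM : x ∈ M := mem_of_commute hM hsa hxm
    obtain ⟨c, hc⟩ := hcorner x hxM
    exact ⟨c, by rw [hx, hc]⟩
  -- every element of eAe lies in ℂe
  have hall : ∀ x : A, ∃ c : ℂ, e * x * e = c • e := by
    intro x
    set y : A := e * x * e with hy
    have hgen2 : ∀ z : A, e * z * e = e * (e * z * e) * e := by
      intro z
      have h2 : e * (e * z * e) * e = (e * e) * z * (e * e) := by noncomm_ring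
      rw [h2, hee]
    have hy' : y = e * y * e := by rw [hy]; exact hgen2 x
    set a : A := (2:ℂ)⁻¹ • (y + star y) with ha
    set b : A := (-(Complex.I/2)) • (y - star y) with hb
    have hs1 : star y = e * star x * e := by
      rw [hy, star_mul, star_mul, proj_star he, mul_assoc]
    have hstary : star y = e * star y * e := by
      rw [hs1]; exact hgen2 (star x)
    have haE : a = e * a * e := by
      rw [ha, mul_smul_comm, smul_mul_assoc]
      congr 1
      rw [mul_add, add_mul, ← hy', ← hstary]
    have hbE : b = e * b * e := by
      rw [hb, mul_smul_comm, smul_mul_assoc]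
      congr 1
      rw [mul_sub, sub_mul, ← hy', ← hstary]
    have haSA : IsSelfAdjoint a := by
      rw [ha]
      show star _ = _
      rw [star_smul, star_add, star_star, add_comm]
      congr 1
      simp
    have hbSA : IsSelfAdjoint b := by
      rw [hb]
      show star _ = _
      rw [star_smul, star_sub, star_star]
      rw [show star (-(Complex.I/2)) = Complex.I/2 by
        rw [Complex.star_def, map_neg, map_div₀, Complex.conj_I, map_ofNat]; ring, show (star y - y) = -(y - star y) by abel]
      rw [smul_neg, ← neg_smul]
    obtain ⟨ca, hca⟩ := hsa_scalar a haE haSA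
    obtain ⟨cb, hcb⟩ := hsa_scalar b hbE hbSA
    have hyab : y = a + Complex.I • b := by
      rw [ha, hb, smul_smul]
      rw [show Complex.I * -(Complex.I/2) = (2:ℂ)⁻¹ by norm_num [Complex.ext_iff]]
      module
    refine ⟨ca + Complex.I * cb, ?_⟩
    rw [hyab, hca, hcb, smul_smul, ← add_smul]
  -- conclude e = 0 by continuity of A
  apply hcont e he
  intro x y
  obtain ⟨cx, hx⟩ := hall x
  obtain ⟨cy, hy⟩ := hall y
  rw [hx, hy, smul_mul_assoc, mul_smul_comm, smul_mul_assoc, mul_smul_comm, hee]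
  rw [smul_comm]

section Small
variable {M : StarSubalgebra ℂ A} (hM : IsMasa M)
  (hAW2 : closure (↑(Submodule.span ℂ {x : A | x ∈ M ∧ IsProjection x}) : Set A) = (M : Set A))
  (hcont : IsContinuousCStar A)
  (τ : A → ℂ)
  (hreal : ∀ p : A, IsProjection p → (τ p).im = 0 ∧ 0 ≤ (τ p).re)
  (hfaithful : ∀ p : A, IsProjection p → τ p = 0 → p = 0)
  (htau_add : ∀ {p q : A}, IsProjection p → IsProjection q → p * q = 0 →
      τ (p + q) = τ p + τ q)

include hreal hfaithful in
lemma tau_pos {p : A} (hp : IsProjection p) (hne : p ≠ 0) : 0 < (τ p).re := by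
  rcases (hreal p hp).2.lt_or_eq with h | h
  · exact h
  · exfalso
    exact hne (hfaithful p hp (Complex.ext h.symm (hreal p hp).1))

include hM hAW2 hcont hreal hfaithful htau_add in
lemma exists_half {e : A} (heM : e ∈ M) (he : IsProjection e) (hne : e ≠ 0) :
    ∃ f : A, f ∈ M ∧ IsProjection f ∧ ProjLE f e ∧ f ≠ 0 ∧ (τ f).re ≤ (τ e).re / 2 := by
  have hnotmin : ¬ (∀ f ∈ M, IsProjection f → ProjLE f e → f = 0 ∨ f = e) := by
    intro h
    exact hne (min_proj_eq_zero hM hAW2 hcont heM he h)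
  push_neg at hnotmin
  obtain ⟨f, hfM, hf, hfle, hfne, hfnee⟩ := hnotmin
  set g : A := e - f with hg
  obtain ⟨hgproj, horth, hgle⟩ := proj_sub hf he hfle
  have hgM : g ∈ M := sub_mem heM hfM
  have hgne : g ≠ 0 := by
    intro h0
    rw [hg, sub_eq_zero] at h0
    exact hfnee h0.symm
  have hsum : τ e = τ f + τ g := by
    have : f + g = e := by rw [hg]; abel
    rw [← this]
    exact htau_add hf hgproj horth
  have hfpos : 0 < (τ f).re := tau_pos τ hreal hfaithful hf hfne
  have hgpos : 0 < (τ g).re := tau_pos τ hreal hfaithful hgproj hgne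
  have hre : (τ e).re = (τ f).re + (τ g).re := by rw [hsum, Complex.add_re]
  rcases le_or_gt (τ f).re ((τ e).re / 2) with h | h
  · exact ⟨f, hfM, hf, hfle, hfne, h⟩
  · refine ⟨g, hgM, hgproj, hgle, hgne, by linarith⟩

include hM hAW2 hcont hreal hfaithful htau_add in
lemma exists_small {e : A} (heM : e ∈ M) (he : IsProjection e) (hne : e ≠ 0)
    {δ : ℝ} (hδ : 0 < δ) :
    ∃ f : A, f ∈ M ∧ IsProjection f ∧ ProjLE f e ∧ f ≠ 0 ∧ (τ f).re ≤ δ := by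
  have key : ∀ n : ℕ, ∃ f : A, f ∈ M ∧ IsProjection f ∧ ProjLE f e ∧ f ≠ 0 ∧
      (τ f).re ≤ (τ e).re / 2 ^ n := by
    intro n
    induction n with
    | zero => exact ⟨e, heM, he, he.2, hne, by simp⟩
    | succ n ih =>
        obtain ⟨f, hfM, hf, hfle, hfne, hfb⟩ := ih
        obtain ⟨f', hf'M, hf', hf'le, hf'ne, hf'b⟩ :=
          exists_half hM hAW2 hcont τ hreal hfaithful htau_add hfM hf hfne
        refine ⟨f', hf'M, hf', ?_, hf'ne, ?_⟩
        · show f' * e = f'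
          have h1 : f' * f = f' := hf'le
          have h2 : f * e = f := hfle
          rw [← h1, mul_assoc, h2]
        · calc (τ f').re ≤ (τ f).re / 2 := hf'b
            _ ≤ ((τ e).re / 2 ^ n) / 2 := by linarith
            _ = (τ e).re / 2 ^ (n + 1) := by ring
  obtain ⟨n, hn⟩ := pow_unbounded_of_one_lt ((τ e).re / δ) (by norm_num : (1:ℝ) < 2)
  obtain ⟨f, hfM, hf, hfle, hfne, hfb⟩ := key n
  refine ⟨f, hfM, hf, hfle, hfne, hfb.trans ?_⟩
  rw [div_le_iff₀ (by positivity)]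
  rw [div_lt_iff₀ hδ] at hn
  linarith [hn]
end Small
end MasaProof

/-- **(Corollary on diffuse MASAs.)** Let `A` be a Type II₁ AW*-factor and `τ` its
canonical quasitrace: a normalized tracial map, real-valued nonnegative and
faithful on projections, completely additive on orthogonal families of
projections, and determining Murray–von Neumann equivalence of projections.
Then for every MASA `M` of `A`, every projection `q ∈ M`, and every real
`t ∈ [0, τ(q)]`, there exists a projection `q' ∈ M` with `q' ≤ q` and
`τ(q') = t`. -/
theorem masa_projection_interpolation_of_typeII1_AW_factor
    (hA : IsTypeII1AWFactor A)
    (τ : A → ℂ)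
    (htrace : ∀ x : A, τ (star x * x) = τ (x * star x))
    (hnorm : τ 1 = 1)
    (hreal : ∀ p : A, IsProjection p → (τ p).im = 0 ∧ 0 ≤ (τ p).re)
    (hfaithful : ∀ p : A, IsProjection p → τ p = 0 → p = 0)
    (hCAP : ∀ (ι : Type) (p : ι → A), (∀ i, IsProjection (p i)) →
      (Pairwise fun i j => p i * p j = 0) →
      ∀ P : A, IsLUBProj (Set.range p) P → HasSum (fun i => τ (p i)) (τ P))
    (hequiv : ∀ p q : A, IsProjection p → IsProjection q →
      ((∃ u : A, p = u * star u ∧ q = star u * u) ↔ τ p = τ q))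
    (M : StarSubalgebra ℂ A) (hM : IsMasa M) :
    ∀ q ∈ M, IsProjection q → ∀ t : ℝ, 0 ≤ t → t ≤ (τ q).re →
      ∃ q' ∈ M, IsProjection q' ∧ ProjLE q' q ∧ τ q' = (t : ℂ) := by
  classical
  intro q hqM hq t ht0 ht1
  obtain ⟨⟨hAW1, hAW2'⟩, _, hcont, _⟩ := hA
  have hAW2 := hAW2' M hM
  have htz : τ (0 : A) = 0 := MasaProof.tau_zero τ hCAP
  have htadd : ∀ {p r : A}, IsProjection p → IsProjection r → p * r = 0 →
      τ (p + r) = τ p + τ r := fun hp hr h => MasaProof.tau_add τ hCAP hp hr h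
  -- The greedy step: given a partial sum `c`, pick an (almost) largest allowed piece.
  have step : ∀ c : A, ∃ f : A,
      (c ∈ M ∧ IsProjection c ∧ ProjLE c q ∧ (τ c).re ≤ t) →
      (f ∈ M ∧ IsProjection f ∧ ProjLE f q ∧ f * c = 0 ∧
        (τ c).re + (τ f).re ≤ t ∧
        ∀ g : A, g ∈ M → IsProjection g → ProjLE g q → g * c = 0 →
          (τ c).re + (τ g).re ≤ t → (τ g).re ≤ 2 * (τ f).re) := by
    intro c
    by_cases hc : c ∈ M ∧ IsProjection c ∧ ProjLE c q ∧ (τ c).re ≤ t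
    swap
    · exact ⟨0, fun h => absurd h hc⟩
    obtain ⟨hcM, hcp, hcq, hct⟩ := hc
    set G : Set ℝ := {x | ∃ g : A, g ∈ M ∧ IsProjection g ∧ ProjLE g q ∧ g * c = 0 ∧
      (τ c).re + x ≤ t ∧ x = (τ g).re} with hG
    have h0G : (0:ℝ) ∈ G := by
      refine ⟨0, zero_mem M, MasaProof.proj_zero, ?_, ?_, ?_, ?_⟩
      · show (0:A) * q = 0; simp
      · simp
      · simpa using hct
      · rw [htz]; simp
    have hbdd : BddAbove G := by
      refine ⟨t, fun x hx => ?_⟩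
      obtain ⟨g, _, hgp, _, _, hxt, _⟩ := hx
      have := (hreal c hcp).2
      linarith
    set s := sSup G with hs
    have hs0 : 0 ≤ s := le_csSup hbdd h0G
    rcases hs0.lt_or_eq with hpos | hzero
    · obtain ⟨x, hxG, hxgt⟩ := exists_lt_of_lt_csSup ⟨0, h0G⟩ (half_lt_self hpos)
      obtain ⟨g, hgM, hgp, hgq, hgc, hgt, hxg⟩ := hxG
      refine ⟨g, fun _ => ⟨hgM, hgp, hgq, hgc, by rw [← hxg]; exact hgt, ?_⟩⟩
      intro g' hg'M hg'p hg'q hg'c hg't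
      have hmem : (τ g').re ∈ G := ⟨g', hg'M, hg'p, hg'q, hg'c, hg't, rfl⟩
      have h1 : (τ g').re ≤ s := le_csSup hbdd hmem
      rw [hxg] at hxgt
      linarith
    · refine ⟨0, fun _ => ⟨zero_mem M, MasaProof.proj_zero, ?_, ?_, ?_, ?_⟩⟩
      · show (0:A) * q = 0; simp
      · simp
      · rw [htz]; simpa using hct
      · intro g' hg'M hg'p hg'q hg'c hg't
        have hmem : (τ g').re ∈ G := ⟨g', hg'M, hg'p, hg'q, hg'c, hg't, rfl⟩
        have h1 : (τ g').re ≤ s := le_csSup hbdd hmem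
        rw [htz]
        simpa [← hzero] using h1
  choose F hF using step
  set cseq : ℕ → A := fun n => Nat.recAux (0 : A) (fun _ cp => cp + F cp) n with hcseq
  have cseq0 : cseq 0 = 0 := rfl
  have cseqS : ∀ n, cseq (n+1) = cseq n + F (cseq n) := fun n => rfl
  set e : ℕ → A := fun n => F (cseq n) with he_def
  -- invariants of the partial sums
  have good : ∀ n, cseq n ∈ M ∧ IsProjection (cseq n) ∧ ProjLE (cseq n) q ∧
      (τ (cseq n)).re ≤ t := by
    intro n
    induction n with
    | zero =>
        refine ⟨by rw [cseq0]; exact zero_mem M, by rw [cseq0]; exact MasaProof.proj_zero,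
          ?_, ?_⟩
        · rw [cseq0]; show (0:A) * q = 0; simp
        · rw [cseq0, htz]; simpa using ht0
    | succ n ih =>
        obtain ⟨hcM, hcp, hcq, hct⟩ := ih
        obtain ⟨heM, hep, heq, heo, het, _⟩ := hF (cseq n) ⟨hcM, hcp, hcq, hct⟩
        have hoc : cseq n * e n = 0 := MasaProof.orth_symm hep hcp heo
        have hproj : IsProjection (cseq (n+1)) := by
          rw [cseqS]; exact MasaProof.proj_add hcp hep hoc
        refine ⟨by rw [cseqS]; exact add_mem hcM heM, hproj, ?_, ?_⟩
        · show cseq (n+1) * q = cseq (n+1)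
          rw [cseqS, add_mul, hcq, heq]
        · have : τ (cseq (n+1)) = τ (cseq n) + τ (e n) := by
            rw [cseqS]; exact htadd hcp hep hoc
          rw [this, Complex.add_re]
          exact het
  have he_props : ∀ n, e n ∈ M ∧ IsProjection (e n) ∧ ProjLE (e n) q ∧
      e n * cseq n = 0 ∧ (τ (cseq n)).re + (τ (e n)).re ≤ t ∧
      ∀ g : A, g ∈ M → IsProjection g → ProjLE g q → g * cseq n = 0 →
        (τ (cseq n)).re + (τ g).re ≤ t → (τ g).re ≤ 2 * (τ (e n)).re :=
    fun n => hF (cseq n) (good n)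
  -- orthogonality
  have hlt : ∀ i j, i < j → e i * cseq j = e i := by
    intro i j
    induction j with
    | zero => omega
    | succ j ih =>
        intro hij
        rcases Nat.lt_succ_iff_lt_or_eq.1 hij with h | h
        · have h1 : e i * cseq j = e i := ih h
          have h2 : cseq j * e j = 0 :=
            MasaProof.orth_symm (he_props j).2.1 (good j).2.1 (he_props j).2.2.2.1
          have h3 : e i * e j = 0 := by rw [← h1, mul_assoc, h2, mul_zero]
          rw [cseqS, mul_add, h1, h3, add_zero]
        · rw [h]
          rw [cseqS, mul_add, (he_props j).2.2.2.1, (he_props j).2.1.2, zero_add]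
  have horthpair : Pairwise (fun i j => e i * e j = 0) := by
    have key : ∀ i j, i < j → e i * e j = 0 := by
      intro i j hij
      have h1 : e i * cseq j = e i := hlt i j hij
      have h2 : cseq j * e j = 0 :=
        MasaProof.orth_symm (he_props j).2.1 (good j).2.1 (he_props j).2.2.2.1
      rw [← h1, mul_assoc, h2, mul_zero]
    intro i j hij
    rcases hij.lt_or_gt with h | h
    · exact key i j h
    · exact MasaProof.orth_symm (he_props j).2.1 (he_props i).2.1 (key j i h)
  -- the LUB of the family
  have hrange_proj : ∀ p ∈ Set.range e, IsProjection p := by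
    rintro p ⟨i, rfl⟩; exact (he_props i).2.1
  have hrange_orth : (Set.range e).Pairwise fun p r => p * r = 0 := by
    rintro p ⟨i, rfl⟩ r ⟨j, rfl⟩ hne
    exact horthpair (fun h => hne (by rw [h]))
  obtain ⟨P, hP⟩ := hAW1 (Set.range e) hrange_proj hrange_orth
  have hrange_mem : ∀ p ∈ Set.range e, p ∈ M := by
    rintro p ⟨i, rfl⟩; exact (he_props i).1
  have hPM : P ∈ M := MasaProof.lub_mem hM hAW2 hrange_mem hrange_proj hP
  have hPq : ProjLE P q := by
    refine hP.2.2 q hq ?_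
    rintro p ⟨i, rfl⟩; exact (he_props i).2.2.1
  have hsum : HasSum (fun i => τ (e i)) (τ P) := hCAP ℕ e (fun i => (he_props i).2.1)
    horthpair P hP
  have hre : HasSum (fun i => (τ (e i)).re) (τ P).re := Complex.hasSum_re hsum
  have hnn : ∀ i, 0 ≤ (τ (e i)).re := fun i => (hreal _ (he_props i).2.1).2
  have hpartial : ∀ n, (τ (cseq n)).re = ∑ i ∈ Finset.range n, (τ (e i)).re := by
    intro n
    induction n with
    | zero => rw [cseq0, htz]; simp
    | succ n ih =>
        have hoc : cseq n * e n = 0 :=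
          MasaProof.orth_symm (he_props n).2.1 (good n).2.1 (he_props n).2.2.2.1
        have hstep : τ (cseq (n+1)) = τ (cseq n) + τ (e n) := by
          rw [cseqS]; exact htadd (good n).2.1 (he_props n).2.1 hoc
        rw [hstep, Complex.add_re, ih, Finset.sum_range_succ]
  set L := (τ P).re with hL
  have hpartial_le : ∀ n, (τ (cseq n)).re ≤ L := by
    intro n
    rw [hpartial n, ← hre.tsum_eq]
    exact Summable.sum_le_tsum (Finset.range n) (fun i _ => hnn i) hre.summable
  have hLle : L ≤ t := by
    rw [← hre.tsum_eq]
    refine Summable.tsum_le_of_sum_le hre.summable ?_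
    intro sfin
    obtain ⟨n, hn⟩ := sfin.exists_nat_subset_range
    calc ∑ i ∈ sfin, (τ (e i)).re ≤ ∑ i ∈ Finset.range n, (τ (e i)).re :=
          Finset.sum_le_sum_of_subset_of_nonneg hn (fun i _ _ => hnn i)
      _ = (τ (cseq n)).re := (hpartial n).symm
      _ ≤ t := (good n).2.2.2
  have hLt : L = t := by
    by_contra hneq
    have hLlt : L < t := lt_of_le_of_ne hLle hneq
    have hδ : 0 < t - L := by linarith
    obtain ⟨hrproj, horthPr, hrq⟩ := MasaProof.proj_sub hP.1 hq hPq
    have hrM : q - P ∈ M := sub_mem hqM hPM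
    have hsplit : τ q = τ P + τ (q - P) := by
      have h := htadd hP.1 hrproj horthPr
      rw [show P + (q - P) = q by abel] at h
      exact h
    have hrre : (τ q).re = L + (τ (q - P)).re := by rw [hsplit, Complex.add_re]
    have hrne : (q - P) ≠ 0 := by
      intro h0
      rw [h0, htz] at hrre
      simp at hrre
      linarith
    obtain ⟨f, hfM, hfp, hfle, hfne, hfsmall⟩ :=
      MasaProof.exists_small hM hAW2 hcont τ hreal hfaithful
        (fun {p r} hp hr h => htadd hp hr h) hrM hrproj hrne hδ
    have hfq : ProjLE f q := by
      show f * q = f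
      have h1 : f * (q - P) = f := hfle
      have h2 : (q - P) * q = q - P := hrq
      rw [← h1, mul_assoc, h2]
    have hcP : ∀ n, cseq n * P = cseq n := by
      intro n
      induction n with
      | zero => rw [cseq0]; simp
      | succ n ih =>
          have heP : e n * P = e n := hP.2.1 (e n) ⟨n, rfl⟩
          rw [cseqS, add_mul, ih, heP]
    have hfc : ∀ n, f * cseq n = 0 := by
      intro n
      have h1 : q * cseq n = cseq n := MasaProof.projLE_rev (good n).2.1 hq (good n).2.2.1
      have h2 : P * cseq n = cseq n := MasaProof.projLE_rev (good n).2.1 hP.1 (hcP n)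
      have h3 : (q - P) * cseq n = 0 := by rw [sub_mul, h1, h2, sub_self]
      have h4 : f * (q - P) = f := hfle
      rw [← h4, mul_assoc, h3, mul_zero]
    have hfpos : 0 < (τ f).re := MasaProof.tau_pos τ hreal hfaithful hfp hfne
    have hbound : ∀ n, (τ f).re ≤ 2 * (τ (e n)).re := by
      intro n
      refine (he_props n).2.2.2.2.2 f hfM hfp hfq (hfc n) ?_
      have := hpartial_le n
      linarith
    have htend : Filter.Tendsto (fun n => 2 * (τ (e n)).re) Filter.atTop (nhds 0) := by
      have h0 := hre.summable.tendsto_atTop_zero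
      have := h0.const_mul (2:ℝ)
      simpa using this
    have hle0 : (τ f).re ≤ 0 := ge_of_tendsto' htend hbound
    linarith
  refine ⟨P, hPM, hP.1, hPq, ?_⟩
  have him : (τ P).im = 0 := (hreal P hP.1).1
  apply Complex.ext
  · simpa using hLt
  · simpa using him
end

section
/- Let A be a unital C*-algebra and suppose there exists a positive linear map E : A** → A from the bidual (equipped with its von Neumann algebra structure) onto A that fixes A pointwise. Then A is monotone complete: every norm-bounded monotone increasing net in the self-adjoint part A_sa has a least upper bound in A_sa. -/
open NormedSpace

variable {A : Type*} [CStarAlgebra A] [PartialOrder A] [StarOrderedRing A]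

/-- A functional `φ ∈ A*` is positive if it takes nonnegative real values on
positive elements. -/
def IsPositiveFunctional (φ : StrongDual ℂ A) : Prop :=
  ∀ a : A, 0 ≤ a → φ a = ((φ a).re : ℂ) ∧ 0 ≤ (φ a).re

/-- An element `x ∈ A**` of the bidual is positive if it takes nonnegative real
values on positive functionals. -/
def IsPositiveInBidual (x : StrongDual ℂ (StrongDual ℂ A)) : Prop :=
  ∀ φ : StrongDual ℂ A, IsPositiveFunctional φ → x φ = (((x φ).re : ℝ) : ℂ) ∧ 0 ≤ (x φ).re

/-- A positive functional is "monotone": on a difference of comparable elements it is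
real and nonnegative. -/
lemma IsPositiveFunctional.sub_real {φ : StrongDual ℂ A} (hφ : IsPositiveFunctional φ)
    {a b : A} (h : a ≤ b) :
    (φ b - φ a).im = 0 ∧ 0 ≤ (φ b - φ a).re := by
  have h0 : (0 : A) ≤ b - a := sub_nonneg.mpr h
  obtain ⟨h1, h2⟩ := hφ (b - a) h0
  have hv : φ (b - a) = φ b - φ a := map_sub φ b a
  rw [hv] at h1 h2
  refine ⟨?_, h2⟩
  rw [h1]
  simp

/-- If a unital C*-algebra `A` is a retract of its bidual — i.e. there is a
positive linear map `E : A** → A` fixing `A` pointwise — then `A` is monotone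
complete: every norm-bounded monotone increasing net of self-adjoint elements
has a least upper bound among the self-adjoint elements. -/
theorem monotoneComplete_of_bidual_retract
    (E : StrongDual ℂ (StrongDual ℂ A) →ₗ[ℂ] A)
    (hpos : ∀ x : StrongDual ℂ (StrongDual ℂ A), IsPositiveInBidual x → 0 ≤ E x)
    (hfix : ∀ a : A, E (inclusionInDoubleDual ℂ A a) = a) :
    ∀ (ι : Type) (_ : Preorder ι), ∀ (x : ι → A),
      (∀ i j : ι, i ≤ j → x i ≤ x j) →
      (∀ i j : ι, ∃ k, i ≤ k ∧ j ≤ k) → Nonempty ι →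
      (∀ i, IsSelfAdjoint (x i)) →
      (∃ C : ℝ, ∀ i, ‖x i‖ ≤ C) →
      ∃ y : A, IsSelfAdjoint y ∧ (∀ i, x i ≤ y) ∧
        ∀ z : A, IsSelfAdjoint z → (∀ i, x i ≤ z) → y ≤ z := by
  intro ι pι x hmono hdir hne hsa hbdd
  letI : Preorder ι := pι
  obtain ⟨C, hC⟩ := hbdd
  obtain ⟨i0⟩ := hne
  have hC0 : 0 ≤ C := le_trans (norm_nonneg _) (hC i0)
  haveI hdir' : IsDirected ι (· ≤ ·) := ⟨fun i j => hdir i j⟩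
  haveI hat : (Filter.atTop : Filter ι).NeBot :=
    Filter.atTop_neBot_iff.mpr ⟨⟨i0⟩, hdir'⟩
  set U : Ultrafilter ι := Ultrafilter.of Filter.atTop with hUdef
  have hU : (U : Filter ι) ≤ Filter.atTop := Ultrafilter.of_le _
  -- existence of ultrafilter limits
  have hlim : ∀ φ : StrongDual ℂ A, ∃ c : ℂ,
      Filter.Tendsto (fun i => φ (x i)) (U : Filter ι) (nhds c) := by
    intro φ
    have hmem : ∀ i, φ (x i) ∈ Metric.closedBall (0 : ℂ) (‖φ‖ * C) := by
      intro i
      simp only [Metric.mem_closedBall, dist_zero_right]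
      calc ‖φ (x i)‖ ≤ ‖φ‖ * ‖x i‖ := φ.le_opNorm (x i)
        _ ≤ ‖φ‖ * C := by
            exact mul_le_mul_of_nonneg_left (hC i) (norm_nonneg φ)
    have hle : (U.map (fun i => φ (x i)) : Filter ℂ) ≤
        Filter.principal (Metric.closedBall (0 : ℂ) (‖φ‖ * C)) := by
      exact Filter.le_principal_iff.mpr (Filter.mem_map.mpr (Filter.univ_mem' hmem))
    obtain ⟨c, _, hc⟩ := (isCompact_closedBall (0 : ℂ) (‖φ‖ * C)).ultrafilter_le_nhds
      (U.map (fun i => φ (x i))) hle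
    exact ⟨c, hc⟩
  choose L hL using hlim
  -- L is linear
  have hLadd : ∀ φ ψ : StrongDual ℂ A, L (φ + ψ) = L φ + L ψ := by
    intro φ ψ
    refine tendsto_nhds_unique ?_ ((hL φ).add (hL ψ))
    have := hL (φ + ψ)
    simpa [ContinuousLinearMap.add_apply] using this
  have hLsmul : ∀ (c : ℂ) (φ : StrongDual ℂ A), L (c • φ) = c * L φ := by
    intro c φ
    refine tendsto_nhds_unique ?_ ((hL φ).const_mul c)
    have := hL (c • φ)
    simpa [ContinuousLinearMap.smul_apply, smul_eq_mul] using this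
  have hLbound : ∀ φ : StrongDual ℂ A, ‖L φ‖ ≤ C * ‖φ‖ := by
    intro φ
    refine le_of_tendsto' ((hL φ).norm) ?_
    intro i
    calc ‖φ (x i)‖ ≤ ‖φ‖ * ‖x i‖ := φ.le_opNorm (x i)
      _ ≤ ‖φ‖ * C := mul_le_mul_of_nonneg_left (hC i) (norm_nonneg φ)
      _ = C * ‖φ‖ := mul_comm _ _
  let Ylin : StrongDual ℂ A →ₗ[ℂ] ℂ :=
    { toFun := L
      map_add' := hLadd
      map_smul' := hLsmul }
  let Y : StrongDual ℂ (StrongDual ℂ A) := Ylin.mkContinuous C hLbound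
  have hYapp : ∀ φ : StrongDual ℂ A, Y φ = L φ := fun φ => rfl
  -- Y - x j is positive in the bidual
  have hYpos : ∀ j, IsPositiveInBidual (Y - inclusionInDoubleDual ℂ A (x j)) := by
    intro j φ hφ
    have hval : (Y - inclusionInDoubleDual ℂ A (x j)) φ = L φ - φ (x j) := by
      simp [ContinuousLinearMap.sub_apply, hYapp, dual_def]
    have htend : Filter.Tendsto (fun i => φ (x i) - φ (x j)) (U : Filter ι)
        (nhds (L φ - φ (x j))) := (hL φ).sub tendsto_const_nhds
    have hev : ∀ᶠ i in (U : Filter ι),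
        (φ (x i) - φ (x j)).im = 0 ∧ 0 ≤ (φ (x i) - φ (x j)).re := by
      refine Filter.Eventually.filter_mono hU ?_
      filter_upwards [Filter.eventually_ge_atTop j] with i hi
      exact hφ.sub_real (hmono j i hi)
    have him : (L φ - φ (x j)).im = 0 := by
      have h1 : Filter.Tendsto (fun i => (φ (x i) - φ (x j)).im) (U : Filter ι)
          (nhds ((L φ - φ (x j)).im)) := (Complex.continuous_im.tendsto _).comp htend
      have h2 : Filter.Tendsto (fun i => (φ (x i) - φ (x j)).im) (U : Filter ι)
          (nhds 0) := by
        refine Filter.Tendsto.congr' ?_ tendsto_const_nhds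
        filter_upwards [hev] with i hi using hi.1.symm
      exact tendsto_nhds_unique h1 h2
    have hre : 0 ≤ (L φ - φ (x j)).re := by
      have h1 : Filter.Tendsto (fun i => (φ (x i) - φ (x j)).re) (U : Filter ι)
          (nhds ((L φ - φ (x j)).re)) := (Complex.continuous_re.tendsto _).comp htend
      refine ge_of_tendsto h1 ?_
      filter_upwards [hev] with i hi using hi.2
    rw [hval]
    constructor
    · exact Complex.ext (by simp) (by simp [him])
    · exact hre
  -- z - Y is positive in the bidual for any upper bound z
  have hzpos : ∀ z : A, (∀ i, x i ≤ z) →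
      IsPositiveInBidual (inclusionInDoubleDual ℂ A z - Y) := by
    intro z hz φ hφ
    have hval : (inclusionInDoubleDual ℂ A z - Y) φ = φ z - L φ := by
      simp [ContinuousLinearMap.sub_apply, hYapp, dual_def]
    have htend : Filter.Tendsto (fun i => φ z - φ (x i)) (U : Filter ι)
        (nhds (φ z - L φ)) := Filter.Tendsto.sub tendsto_const_nhds (hL φ)
    have hev : ∀ᶠ i in (U : Filter ι),
        (φ z - φ (x i)).im = 0 ∧ 0 ≤ (φ z - φ (x i)).re :=
      Filter.Eventually.of_forall fun i => hφ.sub_real (hz i)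
    have him : (φ z - L φ).im = 0 := by
      have h1 : Filter.Tendsto (fun i => (φ z - φ (x i)).im) (U : Filter ι)
          (nhds ((φ z - L φ).im)) := (Complex.continuous_im.tendsto _).comp htend
      have h2 : Filter.Tendsto (fun i => (φ z - φ (x i)).im) (U : Filter ι)
          (nhds 0) := by
        refine Filter.Tendsto.congr' ?_ tendsto_const_nhds
        filter_upwards [hev] with i hi using hi.1.symm
      exact tendsto_nhds_unique h1 h2
    have hre : 0 ≤ (φ z - L φ).re := by
      have h1 : Filter.Tendsto (fun i => (φ z - φ (x i)).re) (U : Filter ι)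
          (nhds ((φ z - L φ).re)) := (Complex.continuous_re.tendsto _).comp htend
      refine ge_of_tendsto h1 ?_
      filter_upwards [hev] with i hi using hi.2
    rw [hval]
    exact ⟨Complex.ext (by simp) (by simp [him]), hre⟩
  -- the candidate supremum
  refine ⟨E Y, ?_, ?_, ?_⟩
  case refine_2 =>
    intro i
    have h := hpos _ (hYpos i)
    rw [map_sub E, hfix] at h
    exact sub_nonneg.mp h
  case refine_1 =>
    have hx0 : x i0 ≤ E Y := by
      have h := hpos _ (hYpos i0)
      rw [map_sub E, hfix] at h
      exact sub_nonneg.mp h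
    have h1 : IsSelfAdjoint (E Y - x i0) :=
      IsSelfAdjoint.of_nonneg (sub_nonneg.mpr hx0)
    have := (hsa i0).add h1
    simpa using this
  case refine_3 =>
    intro z _ hz
    have h := hpos _ (hzpos z hz)
    rw [map_sub E, hfix] at h
    exact sub_nonneg.mp h
end

section
/- Let A be a unital C*-algebra of real rank zero (self-adjoint elements with finite spectrum are dense in A_sa), and let ρ, Φ : A → ℂ be two continuous functions that are both linear on every commutative C*-subalgebra, satisfy ρ(a+ib)=ρ(a)+iρ(b) and Φ(a+ib)=Φ(a)+iΦ(b) for self-adjoint a,b, and agree on all projections of A. Then ρ = Φ. -/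
open ComplexStarModule

open StarAlgebra in
lemma cfc_mem_elemental_aux {A : Type*} [CStarAlgebra A] (a : A) [ha : IsStarNormal a]
    (f : ℂ → ℂ) (hf : ContinuousOn f (spectrum ℂ a)) :
    cfc f a ∈ elemental ℂ a := by
  rw [cfc_apply f a, cfcHom_eq_of_isStarNormal]
  exact Subtype.coe_prop _

/-- Let `A` be a unital C*-algebra of real rank zero (self-adjoint elements of
finite spectrum are dense in the self-adjoint part).  If `ρ, Φ : A → ℂ` are
norm-continuous quasilinear functionals (linear on every commutative
C*-subalgebra, and satisfying `ρ(a+ib) = ρ(a)+iρ(b)` for self-adjoint `a, b`)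
that agree on all projections of `A`, then `ρ = Φ`. -/
theorem quasilinear_eq_of_agree_on_projections
    {A : Type*} [CStarAlgebra A]
    (hrr0 : closure {a : A | IsSelfAdjoint a ∧ (spectrum ℂ a).Finite}
      = {a : A | IsSelfAdjoint a})
    (ρ Φ : A → ℂ)
    (hρcont : Continuous ρ) (hΦcont : Continuous Φ)
    (hρlin : ∀ B : StarSubalgebra ℂ A, (∀ x ∈ B, ∀ y ∈ B, x * y = y * x) →
      (∀ x ∈ B, ∀ y ∈ B, ρ (x + y) = ρ x + ρ y) ∧
      (∀ (c : ℂ), ∀ x ∈ B, ρ (c • x) = c * ρ x))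
    (hΦlin : ∀ B : StarSubalgebra ℂ A, (∀ x ∈ B, ∀ y ∈ B, x * y = y * x) →
      (∀ x ∈ B, ∀ y ∈ B, Φ (x + y) = Φ x + Φ y) ∧
      (∀ (c : ℂ), ∀ x ∈ B, Φ (c • x) = c * Φ x))
    (hρI : ∀ a b : A, IsSelfAdjoint a → IsSelfAdjoint b →
      ρ (a + Complex.I • b) = ρ a + Complex.I * ρ b)
    (hΦI : ∀ a b : A, IsSelfAdjoint a → IsSelfAdjoint b →
      Φ (a + Complex.I • b) = Φ a + Complex.I * Φ b)
    (hproj : ∀ p : A, IsSelfAdjoint p → IsIdempotentElem p → ρ p = Φ p) :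
    ρ = Φ := by
  -- A general lemma: a quasilinear functional applied to a finite linear combination
  -- of elements of a commutative star subalgebra.
  have key : ∀ (ψ : A → ℂ), (∀ B : StarSubalgebra ℂ A, (∀ x ∈ B, ∀ y ∈ B, x * y = y * x) →
      (∀ x ∈ B, ∀ y ∈ B, ψ (x + y) = ψ x + ψ y) ∧
      (∀ (c : ℂ), ∀ x ∈ B, ψ (c • x) = c * ψ x)) →
      ∀ (B : StarSubalgebra ℂ A), (∀ x ∈ B, ∀ y ∈ B, x * y = y * x) →
      ∀ (t : Finset ℂ) (g : ℂ → A), (∀ μ ∈ t, g μ ∈ B) →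
      ψ (∑ μ ∈ t, μ • g μ) = ∑ μ ∈ t, μ * ψ (g μ) := by
    intro ψ hlin B hB t g hg
    obtain ⟨hadd, hsmul⟩ := hlin B hB
    have hψ0 : ψ 0 = 0 := by
      have := hsmul 0 0 (zero_mem B)
      simpa using this
    induction t using Finset.induction with
    | empty => simpa using hψ0
    | insert _ _ hμt ih =>
      rename_i μ t
      rw [Finset.sum_insert hμt, Finset.sum_insert hμt]
      have hgB : ∀ ν ∈ t, g ν ∈ B := fun ν hν => hg ν (Finset.mem_insert_of_mem hν)
      have hsumB : (∑ ν ∈ t, ν • g ν) ∈ B :=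
        sum_mem (fun ν hν => SMulMemClass.smul_mem _ (hgB ν hν))
      have hμB : μ • g μ ∈ B :=
        SMulMemClass.smul_mem _ (hg μ (Finset.mem_insert_self μ t))
      rw [hadd _ hμB _ hsumB, hsmul μ _ (hg μ (Finset.mem_insert_self μ t)), ih hgB]
  -- Step 1: ρ and Φ agree on self-adjoint elements with finite spectrum.
  have hfin : ∀ a : A, IsSelfAdjoint a → (spectrum ℂ a).Finite → ρ a = Φ a := by
    intro a hsa hspec
    have hnorm : IsStarNormal a := hsa.isStarNormal
    set B := StarAlgebra.elemental ℂ a with hBdef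
    have hB : ∀ x ∈ B, ∀ y ∈ B, x * y = y * x := by
      intro x hx y hy
      exact congrArg Subtype.val (mul_comm (⟨x, hx⟩ : B) (⟨y, hy⟩ : B))
    set s : Finset ℂ := hspec.toFinset with hsdef
    set g : ℂ → A := fun μ => cfc (fun z : ℂ => if z = μ then (1 : ℂ) else 0) a with hgdef
    have hcont : ∀ f : ℂ → ℂ, ContinuousOn f (spectrum ℂ a) := fun f =>
      hspec.continuousOn f
    have hgB : ∀ μ ∈ s, g μ ∈ B := fun μ _ => cfc_mem_elemental_aux a _ (hcont _)
    have hgsa : ∀ μ : ℂ, IsSelfAdjoint (g μ) := by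
      intro μ
      rw [IsSelfAdjoint, hgdef]
      rw [← cfc_star (fun z : ℂ => if z = μ then (1 : ℂ) else 0) a]
      congr 1
      ext z
      by_cases h : z = μ <;> simp [h]
    have hgidem : ∀ μ : ℂ, IsIdempotentElem (g μ) := by
      intro μ
      rw [IsIdempotentElem, hgdef]
      rw [← cfc_mul (fun z : ℂ => if z = μ then (1 : ℂ) else 0) _ a (hcont _) (hcont _)]
      congr 1
      ext z
      by_cases h : z = μ <;> simp [h]
    have hdecomp : a = ∑ μ ∈ s, μ • g μ := by
      conv_lhs => rw [← cfc_id ℂ a]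
      have h1 : cfc (id : ℂ → ℂ) a
          = cfc (∑ μ ∈ s, fun z : ℂ => μ • (if z = μ then (1 : ℂ) else 0)) a := by
        apply cfc_congr
        intro z hz
        have hzs : z ∈ s := by simpa [hsdef] using hz
        simp only [Finset.sum_apply, smul_eq_mul, mul_ite, mul_one, mul_zero]
        rw [Finset.sum_ite_eq s z (fun μ => μ), if_pos hzs]
        rfl
      rw [h1, cfc_sum _ a s (fun μ _ => hcont _)]
      refine Finset.sum_congr rfl fun μ _ => ?_
      rw [cfc_smul μ _ a (hcont _)]
    have hρa := key ρ hρlin B hB s g hgB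
    have hΦa := key Φ hΦlin B hB s g hgB
    rw [hdecomp, hρa, hΦa]
    exact Finset.sum_congr rfl fun μ _ => by rw [hproj (g μ) (hgsa μ) (hgidem μ)]
  -- Step 2: by continuity, ρ and Φ agree on all self-adjoint elements.
  have hsa : ∀ a : A, IsSelfAdjoint a → ρ a = Φ a := by
    intro a ha
    have hclosed : IsClosed {x : A | ρ x = Φ x} := isClosed_eq hρcont hΦcont
    have hsub : {a : A | IsSelfAdjoint a ∧ (spectrum ℂ a).Finite} ⊆ {x : A | ρ x = Φ x} :=
      fun x hx => hfin x hx.1 hx.2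
    have : {a : A | IsSelfAdjoint a} ⊆ {x : A | ρ x = Φ x} := by
      rw [← hrr0]
      exact hclosed.closure_subset_iff.mpr hsub
    exact this ha
  -- Step 3: decompose a general element into real and imaginary parts.
  funext x
  have hx := realPart_add_I_smul_imaginaryPart x
  calc ρ x = ρ ((ℜ x : A) + Complex.I • (ℑ x : A)) := by rw [hx]
    _ = ρ (ℜ x : A) + Complex.I * ρ (ℑ x : A) := hρI _ _ (ℜ x).2 (ℑ x).2
    _ = Φ (ℜ x : A) + Complex.I * Φ (ℑ x : A) := by
        rw [hsa _ (ℜ x).2, hsa _ (ℑ x).2]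
    _ = Φ ((ℜ x : A) + Complex.I • (ℑ x : A)) := (hΦI _ _ (ℜ x).2 (ℑ x).2).symm
    _ = Φ x := by rw [hx]
end
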